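/- Let M, N be positive integers. For each n ∈ {1,…,N}, let (X_{1,n},…,X_{M,n}) be a random vector with each X_{m,n} ∈ [0,1] almost surely and Σ_{m=1}^M E[X_{m,n}] = 1, and suppose the N random vectors (X_{1,n},…,X_{M,n}), n ∈ {1,…,N}, are mutually independent. Let C_{m,n} be real constants with |C_{m,n}| ≤ C for all m, n. Then Σ_{m=1}^M E| Σ_{n=1}^N C_{m,n}(X_{m,n} − E[X_{m,n}]) | ≤ C√(MN). -/

import Mathlib

open MeasureTheory ProbabilityTheory

/-- Lemma 4: if for each `n` the random vector `(X_{1,n},…,X_{M,n})`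
has `[0,1]`-valued coordinates with `Σ_m E[X_{m,n}] = 1`, the `N` vectors are
mutually independent, and `|C_{m,n}| ≤ C`, then
`Σ_m E|Σ_n C_{m,n}(X_{m,n} − E[X_{m,n}])| ≤ C √(MN)`. -/
theorem sum_abs_expectation_le {Ω : Type*} [MeasureSpace Ω]
    [IsProbabilityMeasure (ℙ : Measure Ω)]
    {M N : ℕ} (hM : 0 < M) (hN : 0 < N)
    (Xr : Fin M → Fin N → Ω → ℝ)
    (hmeas : ∀ m n, Measurable (Xr m n))
    (hbd : ∀ m n, ∀ᵐ ω ∂(ℙ : Measure Ω), Xr m n ω ∈ Set.Icc (0 : ℝ) 1)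
    (hsum : ∀ n, ∑ m, (∫ ω, Xr m n ω) = 1)
    (hind : iIndepFun
      (fun n (ω : Ω) (m : Fin M) => Xr m n ω) ℙ)
    (C : ℝ) (Cc : Fin M → Fin N → ℝ) (hC : ∀ m n, |Cc m n| ≤ C) :
    ∑ m, (∫ ω, |∑ n, Cc m n * (Xr m n ω - ∫ ω', Xr m n ω')|) ≤
      C * Real.sqrt (M * N) := by
  have hC0 : 0 ≤ C := le_trans (abs_nonneg _) (hC ⟨0, hM⟩ ⟨0, hN⟩)
  set EX : Fin M → Fin N → ℝ := fun m n => ∫ ω, Xr m n ω with hEXdef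
  set Y : Fin M → Fin N → Ω → ℝ := fun m n ω => Cc m n * (Xr m n ω - EX m n) with hYdef
  have hbd1 : ∀ m n, ∀ᵐ ω ∂(ℙ : Measure Ω), ‖Xr m n ω‖ ≤ 1 := by
    intro m n
    filter_upwards [hbd m n] with ω hω
    rw [Real.norm_eq_abs, abs_le]
    exact ⟨le_trans (by norm_num) hω.1, hω.2⟩
  have hmem : ∀ m n, MemLp (Xr m n) 2 ℙ := fun m n =>
    MemLp.of_bound (hmeas m n).aestronglyMeasurable 1 (hbd1 m n)
  have hXint : ∀ m n, Integrable (Xr m n) ℙ := fun m n => (hmem m n).integrable one_le_two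
  have hEXnn : ∀ m n, 0 ≤ EX m n := fun m n =>
    integral_nonneg_of_ae ((hbd m n).mono fun ω hω => hω.1)
  have hZmem : ∀ m n, MemLp (fun ω => Xr m n ω - EX m n) 2 ℙ := fun m n =>
    (hmem m n).sub (memLp_const _)
  have hYmem : ∀ m n, MemLp (Y m n) 2 ℙ := fun m n => (hZmem m n).const_mul _
  have hYint : ∀ m n, Integrable (Y m n) ℙ := fun m n => (hYmem m n).integrable one_le_two
  -- mean zero
  have hZmean : ∀ m n, ∫ ω, (Xr m n ω - EX m n) = 0 := by
    intro m n
    rw [integral_sub (hXint m n) (integrable_const _)]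
    simp [hEXdef]
  have hSmem : ∀ m, MemLp (∑ n, Y m n) 2 ℙ := fun m =>
    memLp_finset_sum' _ fun n _ => hYmem m n
  have hSmean : ∀ m, ∫ ω, (∑ n, Y m n) ω = 0 := by
    intro m
    simp only [Finset.sum_apply]
    rw [integral_finset_sum _ fun n _ => hYint m n]
    refine Finset.sum_eq_zero fun n _ => ?_
    simp only [hYdef]
    rw [integral_const_mul, hZmean m n, mul_zero]
  -- second moment of Z bounded by the mean
  have hZsq : ∀ m n, ∫ ω, (Xr m n ω - EX m n) ^ 2 ≤ EX m n := by
    intro m n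
    have hX2 : Integrable (fun ω => (Xr m n ω) ^ 2) ℙ := (hmem m n).integrable_sq
    have hexp : ∫ ω, (Xr m n ω - EX m n) ^ 2
        = (∫ ω, (Xr m n ω) ^ 2) - (EX m n) ^ 2 := by
      have hint1 : Integrable (fun ω => Xr m n ω ^ 2 - 2 * EX m n * Xr m n ω) ℙ :=
        hX2.sub ((hXint m n).const_mul _)
      have h1 : ∫ ω, (Xr m n ω - EX m n) ^ 2
          = ∫ ω, (Xr m n ω ^ 2 - 2 * EX m n * Xr m n ω + (EX m n) ^ 2) := by
        apply integral_congr_ae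
        filter_upwards with ω
        ring
      rw [h1, integral_add hint1 (integrable_const _),
        integral_sub hX2 ((hXint m n).const_mul _), integral_const_mul, integral_const]
      have hfold : (∫ ω, Xr m n ω) = EX m n := rfl
      rw [hfold]
      simp only [measure_univ, probReal_univ, ENNReal.toReal_one, smul_eq_mul, one_mul]
      ring
    have hmono : ∫ ω, (Xr m n ω) ^ 2 ≤ EX m n := by
      refine integral_mono_ae hX2 (hXint m n) ?_
      filter_upwards [hbd m n] with ω hω
      calc Xr m n ω ^ 2 = Xr m n ω * Xr m n ω := sq (Xr m n ω)
        _ ≤ 1 * Xr m n ω := mul_le_mul_of_nonneg_right hω.2 hω.1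
        _ = Xr m n ω := one_mul _
    nlinarith [sq_nonneg (EX m n)]
  -- variance bound for Y
  have hVarY : ∀ m n, variance (Y m n) ℙ ≤ C ^ 2 * EX m n := by
    intro m n
    have h1 : variance (Y m n) ℙ = (Cc m n) ^ 2 * variance (fun ω => Xr m n ω - EX m n) ℙ :=
      variance_const_mul (Cc m n) _ ℙ
    have h2 : variance (fun ω => Xr m n ω - EX m n) ℙ ≤ EX m n := by
      rw [variance_eq_sub (hZmem m n)]
      calc _ ≤ (ℙ : Measure Ω)[(fun ω => Xr m n ω - EX m n) ^ 2] := by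
              simp only [sub_le_self_iff]; positivity
        _ = ∫ ω, (Xr m n ω - EX m n) ^ 2 := by rfl
        _ ≤ EX m n := hZsq m n
    have h3 : (Cc m n) ^ 2 ≤ C ^ 2 := by
      rw [← sq_abs]
      exact pow_le_pow_left₀ (abs_nonneg _) (hC m n) 2
    calc variance (Y m n) ℙ = (Cc m n) ^ 2 * variance (fun ω => Xr m n ω - EX m n) ℙ := h1
      _ ≤ C ^ 2 * EX m n := mul_le_mul h3 h2 (variance_nonneg _ _) (by positivity)
  -- pairwise independence of the Y's within row m
  have hYindep : ∀ m, ∀ n n' : Fin N, n ≠ n' → IndepFun (Y m n) (Y m n') ℙ := by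
    intro m n n' hne
    have h := hind.indepFun hne
    have hφ : ∀ k : Fin N, Measurable (fun v : Fin M → ℝ => Cc m k * (v m - EX m k)) :=
      fun k => ((measurable_pi_apply m).sub measurable_const).const_mul _
    exact h.comp (hφ n) (hφ n')
  -- variance of the sum
  have hVarS : ∀ m, variance (∑ n, Y m n) ℙ = ∑ n, variance (Y m n) ℙ := fun m =>
    IndepFun.variance_sum (fun n _ => hYmem m n)
      (fun n _ n' _ hne => hYindep m n n' hne)
  -- E|S| ≤ sqrt (Var S)
  have habs : ∀ m, (∫ ω, |(∑ n, Y m n) ω|) ≤ Real.sqrt (variance (∑ n, Y m n) ℙ) := by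
    intro m
    have hTmem : MemLp (fun ω => |(∑ n, Y m n) ω|) 2 ℙ := (hSmem m).abs
    have hTnn : 0 ≤ ∫ ω, |(∑ n, Y m n) ω| := integral_nonneg fun ω => abs_nonneg _
    have hvT := variance_nonneg (fun ω => |(∑ n, Y m n) ω|) ℙ
    rw [variance_eq_sub hTmem] at hvT
    have heq : (ℙ : Measure Ω)[(fun ω => |(∑ n, Y m n) ω|) ^ 2]
        = (ℙ : Measure Ω)[(∑ n, Y m n) ^ 2] := by
      apply integral_congr_ae
      filter_upwards with ω
      simp [sq_abs]
    rw [heq] at hvT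
    refine (Real.le_sqrt hTnn (variance_nonneg _ _)).mpr ?_
    rw [variance_eq_sub (hSmem m), hSmean m]
    have hTm : (ℙ : Measure Ω)[fun ω => |(∑ n, Y m n) ω|] = ∫ ω, |(∑ n, Y m n) ω| := rfl
    rw [hTm] at hvT
    nlinarith [hvT]
  -- put everything together
  have hgoal_eq : ∀ m, (∫ ω, |∑ n, Cc m n * (Xr m n ω - ∫ ω', Xr m n ω')|)
      = ∫ ω, |(∑ n, Y m n) ω| := by
    intro m
    congr 1
    funext ω
    simp only [Finset.sum_apply, hYdef, hEXdef]
  calc ∑ m, (∫ ω, |∑ n, Cc m n * (Xr m n ω - ∫ ω', Xr m n ω')|)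
      = ∑ m, ∫ ω, |(∑ n, Y m n) ω| := Finset.sum_congr rfl fun m _ => hgoal_eq m
    _ ≤ ∑ m, Real.sqrt (variance (∑ n, Y m n) ℙ) := Finset.sum_le_sum fun m _ => habs m
    _ = ∑ m, Real.sqrt 1 * Real.sqrt (variance (∑ n, Y m n) ℙ) := by simp
    _ ≤ Real.sqrt (∑ _m : Fin M, (1 : ℝ)) * Real.sqrt (∑ m, variance (∑ n, Y m n) ℙ) :=
        Real.sum_sqrt_mul_sqrt_le _ (fun _ => zero_le_one) (fun m => variance_nonneg _ _)
    _ ≤ Real.sqrt M * Real.sqrt (C ^ 2 * N) := by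
        gcongr
        · simp
        · calc ∑ m, variance (∑ n, Y m n) ℙ = ∑ m, ∑ n, variance (Y m n) ℙ :=
                Finset.sum_congr rfl fun m _ => hVarS m
            _ ≤ ∑ m, ∑ n, C ^ 2 * EX m n :=
                Finset.sum_le_sum fun m _ => Finset.sum_le_sum fun n _ => hVarY m n
            _ = C ^ 2 * ∑ n, ∑ m, EX m n := by
                rw [Finset.sum_comm, Finset.mul_sum]
                exact Finset.sum_congr rfl fun n _ => (Finset.mul_sum _ _ _).symm
            _ = C ^ 2 * N := by
                have hone : ∀ n : Fin N, ∑ m, EX m n = 1 := hsum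
                simp [hone]
    _ = C * Real.sqrt (M * N) := by
        rw [Real.sqrt_mul (by positivity), Real.sqrt_sq hC0,
          Real.sqrt_mul (by positivity)]
        ring
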